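/- arXiv:2211.00711 — 2 statements merged into one kernel-verified Lean document; each statement's English description precedes it below -/
import Mathlib

section
/- Let (R,σ) be an assignment for (G',v₀). If σ(v₀) = ⊥, then Player 2 has a winning strategy in the game 𝒢(G',v₀), i.e. the initial position v₀ is a loss for the player to move. -/
/-!
Setting: `G` is a finite simple graph on `V`, bipartite with bipartition `V₁, V₂`.
The graph `G'` is obtained from `G` by adding a new vertex `v₁` adjacent to every
vertex of `V₁`, and a new vertex `v₀` adjacent only to `v₁`.  The vertices of `G'`
are encoded by `Option (Option V)`: `none` is `v₀`, `some none` is `v₁`, and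
`some (some v)` is the vertex `v` of `G`.
-/

/-- The vertex set of `G'`. -/
abbrev Vext (V : Type) : Type := Option (Option V)

/-- The added vertex `v₀`. -/
def vzero {V : Type} : Vext V := none

/-- The added vertex `v₁`. -/
def vone {V : Type} : Vext V := some none

/-- The embedding of a vertex of `G` into `G'`. -/
def emb {V : Type} (v : V) : Vext V := some (some v)

/-- The graph `G'` obtained from `G` by adding `v₁` adjacent to every vertex of `V₁`
and `v₀` adjacent only to `v₁`. -/
def extGraph {V : Type} (G : SimpleGraph V) (V1 : Set V) : SimpleGraph (Vext V) where
  Adj x y :=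
    match x, y with
    | none, some none => True
    | some none, none => True
    | some none, some (some v) => v ∈ V1
    | some (some v), some none => v ∈ V1
    | some (some u), some (some v) => G.Adj u v
    | _, _ => False
  symm := by
    refine ⟨?_⟩
    rintro (_ | (_ | x)) (_ | (_ | y)) h <;>
      first
        | exact h
        | exact h.symm
        | exact h.elim
        | trivial
  loopless := by
    refine ⟨?_⟩
    rintro (_ | (_ | x)) h
    · exact h
    · exact h
    · exact G.loopless.irrefl x h

/-- `(R, σ)` is an assignment for `(G', x₀)`: here `σ x = none` encodes `σ(x) = ⊥`. -/
structure IsAssignment {W : Type} (G' : SimpleGraph W) (x0 : W) (R : Set W)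
    (σ : W → Option W) : Prop where
  /-- `x₀ ∈ R`. -/
  mem : x0 ∈ R
  /-- `(C₁)`: for `v ∈ R`, if `σ v = u ∈ V'` then `u` is adjacent to `v`, `u ∈ R` and
  `σ u = ⊥`. -/
  C1 : ∀ v ∈ R, ∀ u, σ v = some u → G'.Adj v u ∧ u ∈ R ∧ σ u = none
  /-- `(C₂)`: for `v ∈ R`, if `σ v = ⊥` then every neighbour `u` of `v` satisfies `u ∈ R`
  and `σ u ≠ ⊥`. -/
  C2 : ∀ v ∈ R, σ v = none → ∀ u, G'.Adj v u → u ∈ R ∧ σ u ≠ none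
  /-- `(C₃)`, first half: for `v ∈ R`, `|σ⁻¹(v)| ≤ 1`. -/
  C3 : ∀ v ∈ R, {w | σ w = some v}.Subsingleton
  /-- `(C₃)`, second half: `σ⁻¹(x₀) = ∅`. -/
  C3' : ∀ w, σ w ≠ some x0

/-- Auxiliary fuelled definition of the game value of the game `𝒢(G', v₀)`.  A position
consists of the current vertex `cur` together with the list `P` of previously visited
vertices (most recent first); the player to move must choose a vertex `v` not occurring
in the position, adjacent to `cur`; a position is a win for the player to move iff some
legal move leads to a loss for the player to move there.  The fuel is (an upper bound
on) the number of unused vertices, which decreases by one at each move, so that with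
fuel equal to the number of unused vertices this is exactly the well-founded definition
of the game value. -/
def winAux {W : Type} (G' : SimpleGraph W) : ℕ → List W → W → Prop
  | 0, _, _ => False
  | n + 1, P, cur => ∃ v, v ∉ cur :: P ∧ G'.Adj cur v ∧ ¬ winAux G' n (cur :: P) v

/-- The position of `𝒢(G', v₀)` with current vertex `cur` and previously visited
vertices `P` (most recent first) is a win for the player to move. -/
def WinPos {W : Type} [Fintype W] (G' : SimpleGraph W) (P : List W) (cur : W) : Prop :=
  winAux G' {w : W | w ∉ cur :: P}.ncard P cur

lemma keyLemma {W : Type} [Fintype W] (G' : SimpleGraph W) (x0 : W) (R : Set W)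
    (σ : W → Option W) (hA : IsAssignment G' x0 R σ) :
    ∀ n (P : List W) (cur : W), cur ∈ R → σ cur = none →
      (∀ x ∈ cur :: P, σ x = none → ∀ w, w ∉ cur :: P → σ w ≠ some x) →
      {w | w ∉ cur :: P}.ncard = n → ¬ winAux G' n P cur := by
  intro n
  induction n using Nat.strong_induction_on with
  | _ n ih =>
    intro P cur hcurR hcurσ hinv hn hw
    match n, hn, hw with
    | (k+1), hn, ⟨v, hv, hadj, hnw⟩ =>
      obtain ⟨hvR, hvσ⟩ := hA.C2 cur hcurR hcurσ v hadj
      obtain ⟨u, hu⟩ : ∃ u, σ v = some u := by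
        cases hσv : σ v with
        | none => exact absurd hσv hvσ
        | some u => exact ⟨u, rfl⟩
      obtain ⟨hadj2, huR, huσ⟩ := hA.C1 v hvR u hu
      have hune : u ∉ cur :: P := fun hmem => hinv u hmem huσ v hv hu
      have hunev : u ≠ v := fun he => by rw [he, hu] at huσ; exact absurd huσ (Option.some_ne_none _)
      have hu2 : u ∉ v :: cur :: P := by
        simp only [List.mem_cons, not_or]
        exact ⟨hunev, by simpa [List.mem_cons, not_or] using hune⟩
      -- counts
      have hset : {w : W | w ∉ v :: cur :: P} = {w | w ∉ cur :: P} \ {v} := by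
        ext w; simp only [Set.mem_setOf_eq, Set.mem_diff, Set.mem_singleton_iff,
          List.mem_cons, not_or]
        tauto
      have hcount1 : {w : W | w ∉ v :: cur :: P}.ncard = k := by
        have hvmem : v ∈ {w : W | w ∉ cur :: P} := hv
        rw [hset, Set.ncard_diff_singleton_of_mem hvmem, hn]; omega
      have hkpos : 1 ≤ k := by
        have : ({w : W | w ∉ v :: cur :: P}).Nonempty := ⟨u, hu2⟩
        have := Set.ncard_pos (Set.toFinite _) |>.2 this
        omega
      obtain ⟨m, rfl⟩ : ∃ m, k = m + 1 := ⟨k - 1, by omega⟩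
      apply hnw
      refine ⟨u, hu2, hadj2, ?_⟩
      apply ih m (by omega) (v :: cur :: P) u huR huσ
      · intro x hx hxσ w hww hwσ
        rcases List.mem_cons.1 hx with h1 | hx
        · -- x = u : both w and v point to u
          rw [h1] at hwσ
          have hwv : w = v := hA.C3 u huR hwσ hu
          exact hww (by rw [hwv]; exact List.mem_cons_of_mem _ List.mem_cons_self)
        rcases List.mem_cons.1 hx with h1 | hx
        · rw [h1] at hxσ; rw [hxσ] at hu; exact absurd hu.symm (Option.some_ne_none _)
        · have hw' : w ∉ cur :: P := fun hc =>
            hww (List.mem_cons_of_mem _ (List.mem_cons_of_mem _ hc))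
          exact hinv x hx hxσ w hw' hwσ
      · have hset2 : {w : W | w ∉ u :: v :: cur :: P} = {w | w ∉ v :: cur :: P} \ {u} := by
          ext w; simp only [Set.mem_setOf_eq, Set.mem_diff, Set.mem_singleton_iff,
            List.mem_cons, not_or]
          tauto
        have humem : u ∈ {w : W | w ∉ v :: cur :: P} := hu2
        rw [hset2, Set.ncard_diff_singleton_of_mem humem, hcount1]; omega

/-- Let `(R, σ)` be an assignment for `(G', v₀)`.  If `σ(v₀) = ⊥`, then Player 2 has a
winning strategy in the game `𝒢(G', v₀)`, i.e. the initial position `v₀` is a loss for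
the player to move. -/
theorem stmt1 {V : Type} [Fintype V] (G : SimpleGraph V) (V1 V2 : Set V)
    (hcover : V1 ∪ V2 = Set.univ) (hdisj : Disjoint V1 V2)
    (hbip : ∀ ⦃u w : V⦄, G.Adj u w → (u ∈ V1 ∧ w ∈ V2) ∨ (u ∈ V2 ∧ w ∈ V1))
    (R : Set (Vext V)) (σ : Vext V → Option (Vext V))
    (hA : IsAssignment (extGraph G V1) vzero R σ)
    (h : σ vzero = none) :
    ¬ WinPos (extGraph G V1) [] vzero := by
  apply keyLemma (extGraph G V1) vzero R σ hA _ [] vzero hA.mem h _ rfl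
  intro x hx hxσ w hw hwσ
  have : x = vzero := by simpa using hx
  exact hA.C3' w (this ▸ hwσ)
end

section
/- Consider any finite execution of the transition system starting from the initial state and reaching, after s steps, the state (P^s, R^s, σ^s, τ^s); let Q^s = R^s − V(P^s). Then: (a) P^s = v₀ v₁ … v_k is a path in G' with V(P^s) ⊆ R^s; (b) the tuple (σ^s, τ^s) is valid for (Q^s, R^s); (c) for every v ∈ Q^s, if σ^s(v) = u ∈ V' then u ∈ N_{G'}(v) ∩ Q^s and σ^s(u) = ⊥; (d) for every v ∈ Q^s, if σ^s(v) = ⊥ then every u ∈ N_{G'}(v) − V(P^s) satisfies u ∈ Q^s and σ^s(u) ≠ ⊥. -/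
/-!
The transition system underlying Algorithm 1.  A state consists of the current path
`P` (stored as a list in *reverse* order, so that the head of the list is the last
vertex `v_k` of the path), the set `R` of reached vertices, and the two maps
`σ, τ : V' → V' ∪ {⊥}` (with `⊥` encoded by `none`).
-/

/-- A state of the transition system. -/
structure AlgState (W : Type) where
  /-- The current path `v₀ v₁ … v_k`, stored in reverse order (head `= v_k`). -/
  P : List W
  /-- The set of reached vertices. -/
  R : Set W
  /-- The map `σ`. -/
  σ : W → Option W
  /-- The map `τ`. -/
  τ : W → Option W

/-- The initial state: `P = x₀ x₁`, `R = {x₀, x₁}`, `σ ≡ ⊥`, `τ ≡ ⊥`. -/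
def initState {W : Type} (x0 x1 : W) : AlgState W :=
  ⟨[x1, x0], {x0, x1}, fun _ => none, fun _ => none⟩

/-- The labelled transition relation of the system, for a graph `G'`.  Steps are only
possible from states whose path `P = v₀ v₁ … v_k` has `k ≥ 1` (at least two vertices).
With `Z = { u ∈ V' − V(P) : u v_k ∈ E', σ(u) = ⊥ }`: if `Z = ∅`, the step is a
*deletion* of the pair `(v_{k−1}, v_k)` (label `(v_{k−1}, some v_k)`); if `Z ≠ ∅`, the
step chooses `z ∈ Z` and is an *introduction* of the pair `(z, w)` where `w = τ(z)`
(label `(z, τ z)`). -/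
inductive LStep {W : Type} [DecidableEq W] (G' : SimpleGraph W) :
    W × Option W → AlgState W → AlgState W → Prop
  | del (vk vk1 : W) (rest : List W) (R : Set W) (σ τ : W → Option W)
      (hZ : ∀ u, u ∉ vk :: vk1 :: rest → G'.Adj u vk → σ u ≠ none) :
      LStep G' (vk1, some vk)
        ⟨vk :: vk1 :: rest, R, σ, τ⟩
        ⟨rest, R,
          Function.update (Function.update σ vk1 (some vk)) vk none,
          Function.update (Function.update τ vk (some vk1)) vk1 none⟩
  | intro_bot (vk : W) (rest : List W) (R : Set W) (σ τ : W → Option W) (z : W)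
      (hrest : rest ≠ [])
      (hz : z ∉ vk :: rest) (hadj : G'.Adj z vk) (hσ : σ z = none) (hτ : τ z = none) :
      LStep G' (z, none)
        ⟨vk :: rest, R, σ, τ⟩
        ⟨z :: vk :: rest, insert z R, σ, τ⟩
  | intro_pair (vk : W) (rest : List W) (R : Set W) (σ τ : W → Option W) (z w : W)
      (hrest : rest ≠ [])
      (hz : z ∉ vk :: rest) (hadj : G'.Adj z vk) (hσ : σ z = none) (hτ : τ z = some w) :
      LStep G' (z, some w)
        ⟨vk :: rest, R, σ, τ⟩
        ⟨w :: z :: vk :: rest, insert z R, σ, τ⟩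

/-- The (unlabelled) transition relation. -/
def Step {W : Type} [DecidableEq W] (G' : SimpleGraph W) (s s' : AlgState W) : Prop :=
  ∃ l, LStep G' l s s'

/-- `{u, v}` is a match of the tuple `t = (σ, τ)`. -/
def IsMatchPair {W : Type} (σ τ : W → Option W) (u v : W) : Prop :=
  σ u = some v ∧ τ u = none ∧ σ v = none ∧ τ v = some u

/-- The tuple `t = (σ, τ)` is valid for `(Q, R)`: (1) every `u` with `σ(u) ≠ ⊥` or
`τ(u) ≠ ⊥` belongs to `R`; (2) `Q` is a union of pairwise disjoint matches of `t`. -/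
def ValidTuple {W : Type} (σ τ : W → Option W) (Q R : Set W) : Prop :=
  (∀ u, (σ u ≠ none ∨ τ u ≠ none) → u ∈ R) ∧
  ∃ pairs : Set (W × W),
    (∀ p ∈ pairs, IsMatchPair σ τ p.1 p.2) ∧
    pairs.PairwiseDisjoint (fun p => ({p.1, p.2} : Set W)) ∧
    Q = ⋃ p ∈ pairs, ({p.1, p.2} : Set W)

/-- The deletion/introduction pair recorded by the label `l` contains the vertex `v`. -/
def PairContains {W : Type} (l : W × Option W) (v : W) : Prop :=
  l.1 = v ∨ l.2 = some v

/-- The invariant of Lemma 1, as a predicate on states. -/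
def AlgInv {W : Type} (G' : SimpleGraph W) (S : AlgState W) : Prop :=
  (S.P.Chain' G'.Adj ∧ S.P.Nodup ∧ ∀ x ∈ S.P, x ∈ S.R) ∧
  ValidTuple S.σ S.τ (S.R \ {x | x ∈ S.P}) S.R ∧
  (∀ v ∈ S.R \ {x | x ∈ S.P}, ∀ u, S.σ v = some u →
    G'.Adj v u ∧ u ∈ S.R \ {x | x ∈ S.P} ∧ S.σ u = none) ∧
  (∀ v ∈ S.R \ {x | x ∈ S.P}, S.σ v = none →
    ∀ u, G'.Adj v u → u ∉ S.P → u ∈ S.R \ {x | x ∈ S.P} ∧ S.σ u ≠ none)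

lemma inv_step {W : Type} [DecidableEq W] {G' : SimpleGraph W} {S S' : AlgState W}
    (hstep : Step G' S S') (hI : AlgInv G' S) : AlgInv G' S' := by
  obtain ⟨l, hstep⟩ := hstep
  cases hstep with
  | del vk vk1 rest R σ τ hZ =>
      unfold AlgInv at hI ⊢
      dsimp only at hI ⊢
      obtain ⟨⟨hchain, hnodup, hPR⟩, ⟨hval1, pairs, hmatch, hdisjp, hQ⟩, hc, hd⟩ := hI
      obtain ⟨hvk, hvk1, hnodup'⟩ : vk ∉ vk1 :: rest ∧ vk1 ∉ rest ∧ rest.Nodup := by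
        simpa [List.nodup_cons] using hnodup
      have hne : vk ≠ vk1 := fun h => hvk (h ▸ List.mem_cons_self)
      have hvkrest : vk ∉ rest := fun h => hvk (List.mem_cons_of_mem _ h)
      rw [List.Chain', List.isChain_cons_cons] at hchain
      obtain ⟨hadj01, hchain'⟩ := hchain
      set σ' := Function.update (Function.update σ vk1 (some vk)) vk none with hσ'def
      set τ' := Function.update (Function.update τ vk (some vk1)) vk1 none with hτ'def
      have hσ'vk : σ' vk = none := Function.update_self _ _ _
      have hσ'vk1 : σ' vk1 = some vk := by
        rw [hσ'def, Function.update_of_ne (Ne.symm hne), Function.update_self]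
      have hσ'o : ∀ x, x ≠ vk → x ≠ vk1 → σ' x = σ x := fun x h1 h2 => by
        rw [hσ'def, Function.update_of_ne h1, Function.update_of_ne h2]
      have hτ'vk1 : τ' vk1 = none := Function.update_self _ _ _
      have hτ'vk : τ' vk = some vk1 := by
        rw [hτ'def, Function.update_of_ne hne, Function.update_self]
      have hτ'o : ∀ x, x ≠ vk → x ≠ vk1 → τ' x = τ x := fun x h1 h2 => by
        rw [hτ'def, Function.update_of_ne h2, Function.update_of_ne h1]
      have hvkR : vk ∈ R := hPR vk (by simp)
      have hvk1R : vk1 ∈ R := hPR vk1 (by simp)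
      have hQnot : ∀ x ∈ R \ {y | y ∈ vk :: vk1 :: rest}, x ≠ vk ∧ x ≠ vk1 := by
        rintro x ⟨hxR, hxP⟩
        simp only [Set.mem_setOf_eq, List.mem_cons, not_or] at hxP
        exact ⟨hxP.1, hxP.2.1⟩
      have hpairsQ : ∀ p ∈ pairs, p.1 ∈ R \ {y | y ∈ vk :: vk1 :: rest} ∧
          p.2 ∈ R \ {y | y ∈ vk :: vk1 :: rest} := fun p hp =>
        ⟨by rw [hQ]; exact Set.mem_biUnion hp (by simp),
         by rw [hQ]; exact Set.mem_biUnion hp (by simp)⟩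
      have hQ'eq : (R \ {y | y ∈ rest}) = {vk1, vk} ∪ (R \ {y | y ∈ vk :: vk1 :: rest}) := by
        ext x
        simp only [Set.mem_diff, Set.mem_setOf_eq, Set.mem_union, Set.mem_insert_iff,
          Set.mem_singleton_iff, List.mem_cons, not_or]
        constructor
        · rintro ⟨hxR, hxrest⟩
          by_cases h1 : x = vk1
          · exact Or.inl (Or.inl h1)
          by_cases h2 : x = vk
          · exact Or.inl (Or.inr h2)
          · exact Or.inr ⟨hxR, h2, h1, hxrest⟩
        · rintro ((rfl | rfl) | ⟨hxR, _, _, hxrest⟩)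
          · exact ⟨hvk1R, hvk1⟩
          · exact ⟨hvkR, hvkrest⟩
          · exact ⟨hxR, hxrest⟩
      refine ⟨⟨hchain'.tail, hnodup', fun x hx => hPR x (by simp [hx])⟩, ?_, ?_, ?_⟩
      · -- ValidTuple
        refine ⟨?_, insert (vk1, vk) pairs, ?_, ?_, ?_⟩
        · intro u hu
          by_cases h1 : u = vk
          · exact h1 ▸ hvkR
          by_cases h2 : u = vk1
          · exact h2 ▸ hvk1R
          · rw [hσ'o u h1 h2, hτ'o u h1 h2] at hu
            exact hval1 u hu
        · rintro p (rfl | hp)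
          · exact ⟨hσ'vk1, hτ'vk1, hσ'vk, hτ'vk⟩
          · obtain ⟨m1, m2, m3, m4⟩ := hmatch p hp
            obtain ⟨h1, h2⟩ := hpairsQ p hp
            obtain ⟨h1a, h1b⟩ := hQnot _ h1
            obtain ⟨h2a, h2b⟩ := hQnot _ h2
            exact ⟨by rw [hσ'o _ h1a h1b]; exact m1, by rw [hτ'o _ h1a h1b]; exact m2,
              by rw [hσ'o _ h2a h2b]; exact m3, by rw [hτ'o _ h2a h2b]; exact m4⟩
        · refine hdisjp.insert ?_
          intro p hp _
          rw [Set.disjoint_left]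
          rintro x (rfl | rfl) hxp
          · obtain ⟨h1, h2⟩ := hpairsQ p hp
            rcases hxp with rfl | rfl
            · exact (hQnot _ h1).2 rfl
            · exact (hQnot _ h2).2 rfl
          · obtain ⟨h1, h2⟩ := hpairsQ p hp
            rcases hxp with rfl | rfl
            · exact (hQnot _ h1).1 rfl
            · exact (hQnot _ h2).1 rfl
        · rw [Set.biUnion_insert, hQ'eq, ← hQ]
      · -- (c)
        intro v hv u hσv
        rw [hQ'eq] at hv
        rcases hv with (rfl | rfl) | hv
        · rw [hσ'vk1] at hσv
          obtain rfl : vk = u := by injection hσv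
          exact ⟨hadj01.symm, by rw [hQ'eq]; exact Or.inl (Or.inr rfl), hσ'vk⟩
        · rw [hσ'vk] at hσv; exact absurd hσv (by simp)
        · obtain ⟨ha, hb⟩ := hQnot _ hv
          rw [hσ'o v ha hb] at hσv
          obtain ⟨hadjvu, huQ, hσu⟩ := hc v hv u hσv
          obtain ⟨ha', hb'⟩ := hQnot _ huQ
          exact ⟨hadjvu, by rw [hQ'eq]; exact Or.inr huQ, by rw [hσ'o u ha' hb']; exact hσu⟩
      · -- (d)
        intro v hv hσv u hadjvu hurest
        rw [hQ'eq] at hv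
        have key : ∀ x, G'.Adj x vk → x ∉ rest → x ≠ vk1 →
            x ∈ R \ {y | y ∈ rest} ∧ σ' x ≠ none := by
          intro x hx hxr hxvk1
          have hxvk : x ≠ vk := fun h => G'.loopless.irrefl vk (h ▸ hx)
          have hxP : x ∉ vk :: vk1 :: rest := by simp [hxvk, hxvk1, hxr]
          have hσx : σ x ≠ none := hZ x hxP hx
          have hxR : x ∈ R := hval1 x (Or.inl hσx)
          exact ⟨⟨hxR, hxr⟩, by rw [hσ'o x hxvk hxvk1]; exact hσx⟩
        rcases hv with (rfl | rfl) | hv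
        · rw [hσ'vk1] at hσv; exact absurd hσv (by simp)
        · -- v = vk
          by_cases h1 : u = vk1
          · subst h1
            exact ⟨by rw [hQ'eq]; exact Or.inl (Or.inl rfl), by rw [hσ'vk1]; simp⟩
          · exact key u hadjvu.symm hurest h1
        · obtain ⟨ha, hb⟩ := hQnot _ hv
          rw [hσ'o v ha hb] at hσv
          by_cases h1 : u = vk1
          · subst h1
            exact ⟨by rw [hQ'eq]; exact Or.inl (Or.inl rfl), by rw [hσ'vk1]; simp⟩
          by_cases h2 : u = vk
          · exact absurd hσv (hZ v hv.2 (h2 ▸ hadjvu))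
          · have huP : u ∉ vk :: vk1 :: rest := by simp [h1, h2, hurest]
            obtain ⟨huQ, hσu⟩ := hd v hv hσv u hadjvu huP
            exact ⟨by rw [hQ'eq]; exact Or.inr huQ, by rw [hσ'o u h2 h1]; exact hσu⟩

  | intro_bot vk rest R σ τ z hrest hz hadj hσ hτ =>
      unfold AlgInv at hI ⊢
      dsimp only at hI ⊢
      obtain ⟨⟨hchain, hnodup, hPR⟩, ⟨hval1, pairs, hmatch, hdisjp, hQ⟩, hc, hd⟩ := hI
      have hzQ : z ∉ R \ {y | y ∈ vk :: rest} := by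
        intro hzQ
        rw [hQ] at hzQ
        simp only [Set.mem_iUnion, Set.mem_insert_iff, Set.mem_singleton_iff,
          exists_prop] at hzQ
        obtain ⟨p, hp, h | h⟩ := hzQ
        · obtain ⟨m1, _, _, _⟩ := hmatch p hp
          rw [← h, hσ] at m1; exact absurd m1 (by simp)
        · obtain ⟨_, _, _, m4⟩ := hmatch p hp
          rw [← h, hτ] at m4; exact absurd m4 (by simp)
      have hzR : z ∉ R := fun h => hzQ ⟨h, hz⟩
      have hQ'eq : ((insert z R) \ {y | y ∈ z :: vk :: rest}) = R \ {y | y ∈ vk :: rest} := by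
        ext x
        simp only [Set.mem_diff, Set.mem_insert_iff, Set.mem_setOf_eq, List.mem_cons]
        by_cases hxz : x = z
        · subst hxz; simp [hzR]
        · simp [hxz]
      refine ⟨⟨List.isChain_cons_cons.mpr ⟨hadj, hchain⟩, List.nodup_cons.mpr ⟨hz, hnodup⟩, ?_⟩,
        ?_, ?_, ?_⟩
      · intro x hx
        rcases List.mem_cons.mp hx with rfl | hx
        · exact Set.mem_insert _ _
        · exact Set.mem_insert_of_mem _ (hPR x hx)
      · exact ⟨fun u h => Set.mem_insert_of_mem _ (hval1 u h), pairs, hmatch, hdisjp,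
          by rw [hQ'eq]; exact hQ⟩
      · rw [hQ'eq]; exact hc
      · rw [hQ'eq]
        intro v hv hσv u hadjvu hu
        exact hd v hv hσv u hadjvu (fun h => hu (List.mem_cons_of_mem _ h))
  | intro_pair vk rest R σ τ z w hrest hz hadj hσ hτ =>
      unfold AlgInv at hI ⊢
      dsimp only at hI ⊢
      obtain ⟨⟨hchain, hnodup, hPR⟩, ⟨hval1, pairs, hmatch, hdisjp, hQ⟩, hc, hd⟩ := hI
      have hzR : z ∈ R := hval1 z (Or.inr (by rw [hτ]; simp))
      have hzQ : z ∈ R \ {y | y ∈ vk :: rest} := ⟨hzR, hz⟩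
      obtain ⟨p0, hp0, hzp⟩ : ∃ p ∈ pairs, z ∈ ({p.1, p.2} : Set W) := by
        rw [hQ] at hzQ
        simpa using hzQ
      obtain ⟨m1, m2, m3, m4⟩ := hmatch p0 hp0
      have hz2 : z = p0.2 := by
        rcases hzp with h | h
        · rw [← h, hσ] at m1; exact absurd m1 (by simp)
        · exact h
      have hw1 : p0.1 = w := by
        rw [← hz2, hτ] at m4
        exact (Option.some_injective _ m4.symm)
      have hσw : σ w = some z := by rw [hw1, ← hz2] at m1; exact m1
      have hτw : τ w = none := by rw [← hw1]; exact m2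
      have hwQ : w ∈ R \ {y | y ∈ vk :: rest} := by
        rw [hQ]; exact Set.mem_biUnion hp0 (by simp [hw1])
      obtain ⟨hadjwz, -, -⟩ := hc w hwQ z hσw
      have hwz : w ≠ z := hadjwz.ne
      have hwP : w ∉ vk :: rest := hwQ.2
      have hfp0 : ({p0.1, p0.2} : Set W) = {w, z} := by rw [hw1, ← hz2]
      have hQ'eq : ((insert z R) \ {y | y ∈ w :: z :: vk :: rest})
          = (R \ {y | y ∈ vk :: rest}) \ {w, z} := by
        ext x
        simp only [Set.mem_diff, Set.mem_insert_iff, Set.mem_setOf_eq, List.mem_cons,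
          Set.mem_singleton_iff, not_or]
        constructor
        · rintro ⟨h1, hw', hz', hvk', hrest'⟩
          exact ⟨⟨h1.resolve_left hz', hvk', hrest'⟩, hw', hz'⟩
        · rintro ⟨⟨h1, hvk', hrest'⟩, hw', hz'⟩
          exact ⟨Or.inr h1, hw', hz', hvk', hrest'⟩
      refine ⟨⟨?_, ?_, ?_⟩, ?_, ?_, ?_⟩
      · exact List.isChain_cons_cons.mpr ⟨hadjwz, List.isChain_cons_cons.mpr ⟨hadj, hchain⟩⟩
      · refine List.nodup_cons.mpr ⟨?_, List.nodup_cons.mpr ⟨hz, hnodup⟩⟩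
        simp only [List.mem_cons, not_or]
        refine ⟨hwz, ?_, ?_⟩ <;> intro h <;>
          exact hwP (by simp [h] at hwP ⊢ <;> tauto)
      · intro x hx
        rcases List.mem_cons.mp hx with rfl | hx
        · exact Set.mem_insert_of_mem _ hwQ.1
        rcases List.mem_cons.mp hx with rfl | hx
        · exact Set.mem_insert _ _
        · exact Set.mem_insert_of_mem _ (hPR x hx)
      · -- ValidTuple
        refine ⟨fun u h => Set.mem_insert_of_mem _ (hval1 u h), pairs \ {p0},
          fun p hp => hmatch p hp.1, hdisjp.subset Set.diff_subset, ?_⟩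
        rw [hQ'eq]
        ext x
        constructor
        · rintro ⟨hxQ, hxwz⟩
          rw [hQ] at hxQ
          simp only [Set.mem_iUnion, exists_prop] at hxQ
          obtain ⟨p, hp, hxp⟩ := hxQ
          refine Set.mem_biUnion (Set.mem_diff_singleton.mpr ⟨hp, ?_⟩) hxp
          intro hpe
          rw [hpe] at hxp
          exact hxwz (by rw [← hfp0]; exact hxp)
        · intro hx
          simp only [Set.mem_iUnion, exists_prop] at hx
          obtain ⟨p, hp, hxp⟩ := hx
          obtain ⟨hpm, hpne⟩ := Set.mem_diff_singleton.mp hp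
          refine ⟨by rw [hQ]; exact Set.mem_biUnion hpm hxp, ?_⟩
          intro hxwz
          have hdj := hdisjp hpm hp0 hpne
          have hx2 : x ∈ ({p0.1, p0.2} : Set W) := by rw [hfp0]; exact hxwz
          exact Set.disjoint_left.mp hdj hxp hx2
      · -- (c)
        rw [hQ'eq]
        rintro v ⟨hvQ, hvwz⟩ u hσv
        obtain ⟨hadjvu, huQ, hσu⟩ := hc v hvQ u hσv
        refine ⟨hadjvu, ⟨huQ, ?_⟩, hσu⟩
        simp only [Set.mem_insert_iff, Set.mem_singleton_iff, not_or]
        constructor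
        · intro h; rw [h, hσw] at hσu; exact absurd hσu (by simp)
        · intro h
          rw [h] at hσv
          -- σ v = some z forces v = w
          have hvQ' := hvQ
          rw [hQ] at hvQ'
          simp only [Set.mem_iUnion, exists_prop] at hvQ'
          obtain ⟨p, hp, hvp⟩ := hvQ'
          obtain ⟨n1, n2, n3, n4⟩ := hmatch p hp
          rcases hvp with h | h
          · rw [← h] at n1
            rw [hσv] at n1
            have hp2 : p.2 = z := (Option.some_injective _ n1.symm)
            have : p = p0 := by
              by_contra hne
              have hdj := hdisjp hp hp0 hne
              have hz1 : z ∈ ({p.1, p.2} : Set W) := by rw [← hp2]; simp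
              have hz2' : z ∈ ({p0.1, p0.2} : Set W) := by rw [hz2]; simp
              exact Set.disjoint_left.mp hdj hz1 hz2'
            rw [this, hw1] at h
            exact hvwz (by simp [h])
          · rw [← h, hσv] at n3; exact absurd n3 (by simp)
      · -- (d)
        rw [hQ'eq]
        rintro v ⟨hvQ, hvwz⟩ hσv u hadjvu huP
        simp only [List.mem_cons, not_or] at huP
        obtain ⟨huw, huz, huvk, hur⟩ := huP
        obtain ⟨huQ, hσu⟩ := hd v hvQ hσv u hadjvu (by simp [huvk, hur])
        exact ⟨⟨huQ, by simp [huw, huz]⟩, hσu⟩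


/-- Lemma 1: the four invariants of the algorithm.  For any state
`(P^s, R^s, σ^s, τ^s)` reached from the initial state after finitely many steps,
with `Q^s = R^s − V(P^s)`: (a) `P^s` is a path in `G'` with `V(P^s) ⊆ R^s`;
(b) `(σ^s, τ^s)` is a valid tuple for `(Q^s, R^s)`; (c) for `v ∈ Q^s`, if
`σ^s(v) = u ∈ V'` then `u ∈ N_{G'}(v) ∩ Q^s` and `σ^s(u) = ⊥`; (d) for `v ∈ Q^s`, if
`σ^s(v) = ⊥` then every `u ∈ N_{G'}(v) − V(P^s)` satisfies `u ∈ Q^s` and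
`σ^s(u) ≠ ⊥`. -/
theorem stmt5 {V : Type} [Fintype V] [DecidableEq V] (G : SimpleGraph V) (V1 V2 : Set V)
    (hcover : V1 ∪ V2 = Set.univ) (hdisj : Disjoint V1 V2)
    (hbip : ∀ ⦃u w : V⦄, G.Adj u w → (u ∈ V1 ∧ w ∈ V2) ∨ (u ∈ V2 ∧ w ∈ V1))
    (S : AlgState (Vext V))
    (hreach : Relation.ReflTransGen (Step (extGraph G V1)) (initState vzero vone) S) :
    (S.P.Chain' (extGraph G V1).Adj ∧ S.P.Nodup ∧ ∀ x ∈ S.P, x ∈ S.R) ∧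
    ValidTuple S.σ S.τ (S.R \ {x | x ∈ S.P}) S.R ∧
    (∀ v ∈ S.R \ {x | x ∈ S.P}, ∀ u, S.σ v = some u →
      (extGraph G V1).Adj v u ∧ u ∈ S.R \ {x | x ∈ S.P} ∧ S.σ u = none) ∧
    (∀ v ∈ S.R \ {x | x ∈ S.P}, S.σ v = none →
      ∀ u, (extGraph G V1).Adj v u → u ∉ S.P →
        u ∈ S.R \ {x | x ∈ S.P} ∧ S.σ u ≠ none) := by
  have key : AlgInv (extGraph G V1) S := by
    induction hreach with
    | refl =>
        unfold AlgInv initState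
        dsimp only
        have hQ0 : ({vzero, vone} : Set (Vext V)) \ {x | x ∈ [vone, vzero]} = ∅ := by
          ext x
          simp only [Set.mem_diff, Set.mem_insert_iff, Set.mem_singleton_iff,
            Set.mem_setOf_eq, List.mem_cons, List.not_mem_nil, or_false,
            Set.mem_empty_iff_false, iff_false, not_and, not_or]
          tauto
        refine ⟨⟨?_, ?_, ?_⟩, ?_, ?_, ?_⟩
        · refine List.isChain_pair.mpr ?_
          unfold vone vzero extGraph
          exact trivial
        · simp [vone, vzero]
        · intro x hx
          rcases List.mem_cons.mp hx with rfl | hx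
          · exact Or.inr rfl
          · simp only [List.mem_cons, List.not_mem_nil, or_false] at hx
            exact Or.inl hx
        · refine ⟨fun u h => (h.elim (fun h => absurd rfl h) (fun h => absurd rfl h)),
            ∅, by simp, Set.pairwiseDisjoint_empty, by rw [hQ0]; simp⟩
        · intro v hv
          rw [hQ0] at hv
          exact hv.elim
        · intro v hv
          rw [hQ0] at hv
          exact hv.elim
    | tail _ hstep ih => exact inv_step hstep ih
  exact key
end
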